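/- Let F be a field and n ≥ 3. There is a constant c_n > 0, depending only on n, with the following property: let 𝔏 be a finite set of lines in F^n and let K be a subset of the set of joints of 𝔏. Suppose that for each line l ∈ 𝔏 we have |l ∩ K| ≥ m. Then |K| ≥ c_n · m^n. -/

import Mathlib

/-- A line in `F^n`: a set of the form `{v + t • b : t ∈ F}` with `b ≠ 0`. -/
def IsLine (F : Type*) [Field F] {n : ℕ} (l : Set (Fin n → F)) : Prop :=
  ∃ v b : Fin n → F, b ≠ 0 ∧ l = {x | ∃ t : F, x = v + t • b}

/-- `b` is a direction of the line `l`. -/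
def IsDirection (F : Type*) [Field F] {n : ℕ} (b : Fin n → F) (l : Set (Fin n → F)) : Prop :=
  b ≠ 0 ∧ ∃ v : Fin n → F, l = {x | ∃ t : F, x = v + t • b}

/-- The lines `l 0, …, l (n-1)` form a joint at `x`: each passes through `x` and
their directions span `F^n`. -/
def FormsJoint (F : Type*) [Field F] {n : ℕ} (l : Fin n → Set (Fin n → F))
    (x : Fin n → F) : Prop :=
  (∀ i, x ∈ l i) ∧ ∃ b : Fin n → Fin n → F,
    (∀ i, IsDirection F (b i) (l i)) ∧ Submodule.span F (Set.range b) = ⊤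

/-- `x` is a joint of the collection `𝔏`: there are (at least) `n` distinct lines of `𝔏`
through `x` whose directions span `F^n`. -/
def IsJoint (F : Type*) [Field F] {n : ℕ} (𝔏 : Set (Set (Fin n → F)))
    (x : Fin n → F) : Prop :=
  ∃ l : Fin n → Set (Fin n → F), Function.Injective l ∧ (∀ i, l i ∈ 𝔏) ∧ FormsJoint F l x

/-- The multiplicity `N(x)`: the number of `n`-tuples of lines of `𝔏` forming a joint at `x`. -/
noncomputable def jointMult (F : Type*) [Field F] {n : ℕ} (𝔏 : Set (Set (Fin n → F)))
    (x : Fin n → F) : ℕ :=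
  Set.ncard {l : Fin n → Set (Fin n → F) | (∀ i, l i ∈ 𝔏) ∧ FormsJoint F l x}

/-- `𝔏` is generic: whenever `n` distinct lines of `𝔏` pass through a common point,
they form a joint there. -/
def Generic (F : Type*) [Field F] {n : ℕ} (𝔏 : Set (Set (Fin n → F))) : Prop :=
  ∀ (l : Fin n → Set (Fin n → F)) (x : Fin n → F), Function.Injective l →
    (∀ i, l i ∈ 𝔏) → (∀ i, x ∈ l i) → FormsJoint F l x


open MvPolynomial Polynomial

variable {F L : Type*} [Field F] [Field L] {n : ℕ}




lemma line_rebase {v b x₀ : Fin n → F}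
    (hx : x₀ ∈ {x : Fin n → F | ∃ t : F, x = v + t • b}) :
    {x : Fin n → F | ∃ t : F, x = v + t • b} = {x | ∃ s : F, x = x₀ + s • b} := by
  obtain ⟨t₀, rfl⟩ := hx
  ext y
  constructor
  · rintro ⟨t, rfl⟩
    exact ⟨t - t₀, by ext i; simp [sub_smul]⟩
  · rintro ⟨s, rfl⟩
    exact ⟨t₀ + s, by ext i; simp [add_smul]; ring⟩

lemma param_injective {b : Fin n → F} (hb : b ≠ 0) (x₀ : Fin n → F) :
    Function.Injective (fun t : F => x₀ + t • b) := by
  intro s t hst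
  obtain ⟨j, hj⟩ := Function.ne_iff.mp hb
  have := congrFun hst j
  simp only [Pi.add_apply, Pi.smul_apply, smul_eq_mul, add_right_inj] at this
  exact mul_right_cancel₀ hj this

lemma lines_eq_of_two_points {l l' : Set (Fin n → F)} (hl : IsLine F l) (hl' : IsLine F l')
    {x y : Fin n → F} (hxy : x ≠ y) (hxl : x ∈ l) (hyl : y ∈ l) (hxl' : x ∈ l')
    (hyl' : y ∈ l') : l = l' := by
  obtain ⟨v, b, hb, rfl⟩ := hl
  obtain ⟨v', b', hb', rfl⟩ := hl'
  rw [line_rebase hxl] at hyl ⊢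
  rw [line_rebase hxl'] at hyl' ⊢
  obtain ⟨s, hs⟩ := hyl
  obtain ⟨s', hs'⟩ := hyl'
  have hs0 : s ≠ 0 := by rintro rfl; simp only [zero_smul, add_zero] at hs; exact hxy hs.symm
  have hs0' : s' ≠ 0 := by rintro rfl; simp only [zero_smul, add_zero] at hs'; exact hxy hs'.symm
  have h2 : s • b = s' • b' := add_left_cancel (hs ▸ hs' ▸ rfl : x + s • b = x + s' • b')
  have hbb : b' = (s'⁻¹ * s) • b := by
    rw [mul_smul, h2, ← mul_smul, inv_mul_cancel₀ hs0', one_smul]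
  ext y
  constructor
  · rintro ⟨t, rfl⟩
    refine ⟨s' * s⁻¹ * t, ?_⟩
    rw [hbb, ← mul_smul]
    congr 2
    field_simp
  · rintro ⟨t, rfl⟩
    exact ⟨t * (s'⁻¹ * s), by rw [hbb, ← mul_smul]⟩




/-- Degree bound for substituting degree-≤1 polynomials. -/
lemma natDegree_aeval_le (g : Fin n → L[X]) (hg : ∀ i, (g i).natDegree ≤ 1)
    (P : MvPolynomial (Fin n) L) :
    (MvPolynomial.aeval g P : L[X]).natDegree ≤ P.totalDegree := by
  conv_lhs => rw [P.as_sum]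
  rw [map_sum]
  apply Polynomial.natDegree_sum_le_of_forall_le
  intro s hs
  rw [MvPolynomial.aeval_monomial]
  refine (Polynomial.natDegree_mul_le).trans ?_
  have h1 : (algebraMap L L[X] (MvPolynomial.coeff s P)).natDegree = 0 := by
    simp [Polynomial.natDegree_C]
  rw [h1, zero_add]
  refine le_trans ?_ (MvPolynomial.le_totalDegree hs)
  rw [Finsupp.prod, Finsupp.sum]
  refine (Polynomial.natDegree_prod_le _ _).trans ?_
  apply Finset.sum_le_sum
  intro i _
  calc ((g i) ^ (s i)).natDegree ≤ s i * (g i).natDegree := Polynomial.natDegree_pow_le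
    _ ≤ s i * 1 := Nat.mul_le_mul_left _ (hg i)
    _ = s i := Nat.mul_one _

/-- Chain rule for substituting univariate polynomials into a multivariate polynomial. -/
lemma derivative_aeval (g : Fin n → L[X]) (P : MvPolynomial (Fin n) L) :
    Polynomial.derivative (MvPolynomial.aeval g P : L[X]) =
      ∑ j, (MvPolynomial.aeval g (MvPolynomial.pderiv j P) : L[X]) *
        Polynomial.derivative (g j) := by
  induction P using MvPolynomial.induction_on with
  | C a => simp
  | add p q hp hq => simp [hp, hq, add_mul, Finset.sum_add_distrib]
  | mul_X p i hp =>
    simp only [map_mul, MvPolynomial.aeval_X, Polynomial.derivative_mul, hp]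
    rw [Finset.sum_mul]
    have : ∀ j : Fin n, (MvPolynomial.aeval g (MvPolynomial.pderiv j (p * MvPolynomial.X i)) : L[X])
        * Polynomial.derivative (g j)
        = (MvPolynomial.aeval g (MvPolynomial.pderiv j p) : L[X]) * Polynomial.derivative (g j)
          * g i + (if j = i then (MvPolynomial.aeval g p : L[X]) * Polynomial.derivative (g j)
            else 0) := by
      intro j
      rw [(MvPolynomial.pderiv j).leibniz p (MvPolynomial.X i), MvPolynomial.pderiv_X]
      by_cases h : j = i <;> simp [h, Pi.single_apply, add_mul] <;> ring
    rw [Finset.sum_congr rfl (fun j _ => this j), Finset.sum_add_distrib]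
    simp [add_comm]

/-- Coefficient formula for partial derivatives. -/
lemma coeff_pderiv (j : Fin n) (P : MvPolynomial (Fin n) L) (τ : Fin n →₀ ℕ) :
    MvPolynomial.coeff τ (MvPolynomial.pderiv j P) =
      (τ j + 1 : ℕ) * MvPolynomial.coeff (τ + Finsupp.single j 1) P := by
  induction P using MvPolynomial.induction_on' with
  | add p q hp hq => simp [hp, hq, mul_add]
  | monomial s a =>
    rw [MvPolynomial.pderiv_monomial]
    rcases Nat.eq_zero_or_pos (s j) with h0 | hpos
    · have h1 : s - Finsupp.single j 1 = s := by
        ext k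
        rcases eq_or_ne k j with rfl | hk
        · simp [h0]
        · simp [Finsupp.single_apply, hk.symm]
      have h2 : s ≠ τ + Finsupp.single j 1 := by
        intro h
        apply absurd h0
        rw [h]
        simp
      simp [h1, h0, MvPolynomial.coeff_monomial, h2]
    · have hle : Finsupp.single j 1 ≤ s := by
        rw [Finsupp.single_le_iff]; exact hpos
      have key : s - Finsupp.single j 1 = τ ↔ s = τ + Finsupp.single j 1 := by
        constructor
        · intro h; rw [← h, tsub_add_cancel_of_le hle]
        · intro h; rw [h, add_tsub_cancel_right]
      rcases eq_or_ne (s - Finsupp.single j 1) τ with he | hne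
      · have hs' : s = τ + Finsupp.single j 1 := key.mp he
        have hsj : s j = τ j + 1 := by rw [hs']; simp
        simp [MvPolynomial.coeff_monomial, he, hs', hsj, mul_comm]
      · have hs' : s ≠ τ + Finsupp.single j 1 := fun h => hne (key.mpr h)
        simp [MvPolynomial.coeff_monomial, hne, hs']



lemma span_iff_det (b : Fin n → Fin n → F) :
    Submodule.span F (Set.range b) = ⊤ ↔ IsUnit (Matrix.of b).det := by
  rw [← Matrix.isUnit_iff_isUnit_det, ← Matrix.vecMul_surjective_iff_isUnit]
  constructor
  · intro h
    intro v
    have hv : v ∈ Submodule.span F (Set.range b) := h ▸ Submodule.mem_top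
    rw [Submodule.mem_span_range_iff_exists_fun F] at hv
    obtain ⟨c, hc⟩ := hv
    refine ⟨c, ?_⟩
    ext j
    rw [← hc]
    simp [Matrix.vecMul, dotProduct, Finset.sum_apply]
  · intro h
    rw [eq_top_iff]
    rintro v -
    obtain ⟨c, hc⟩ := h v
    rw [Submodule.mem_span_range_iff_exists_fun F]
    refine ⟨c, ?_⟩
    ext j
    rw [← hc]
    simp [Matrix.vecMul, dotProduct, Finset.sum_apply]

lemma span_transfer (φ : F →+* L) (b : Fin n → Fin n → F)
    (h : Submodule.span F (Set.range b) = ⊤) :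
    Submodule.span L (Set.range (fun i => φ ∘ b i)) = ⊤ := by
  rw [span_iff_det] at h ⊢
  have : (Matrix.of fun i => φ ∘ b i) = φ.mapMatrix (Matrix.of b) := rfl
  rw [this, ← RingHom.map_det]
  rw [isUnit_iff_ne_zero] at h ⊢
  intro h0
  exact h (φ.injective (by rw [h0, map_zero]))

lemma eq_zero_of_dot_span (b : Fin n → Fin n → L) (w : Fin n → L)
    (hspan : Submodule.span L (Set.range b) = ⊤)
    (h : ∀ i, ∑ j, b i j * w j = 0) : ∀ j, w j = 0 := by
  classical
  let φ : (Fin n → L) →ₗ[L] L :=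
    { toFun := fun u => ∑ j, u j * w j
      map_add' := by intro u v; simp [add_mul, Finset.sum_add_distrib]
      map_smul' := by intro c u; simp [Finset.mul_sum, mul_assoc] }
  have hker : Submodule.span L (Set.range b) ≤ LinearMap.ker φ := by
    rw [Submodule.span_le]
    rintro - ⟨i, rfl⟩
    exact h i
  intro j
  have : Pi.single j (1:L) ∈ LinearMap.ker φ := hker (hspan ▸ Submodule.mem_top)
  simpa [φ, Pi.single_apply] using this




noncomputable def expOf {q : ℕ} (e : Fin n → Fin q) : Fin n →₀ ℕ :=
  Finsupp.equivFunOnFinite.symm (fun i => (e i : ℕ))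

lemma expOf_injective {q : ℕ} : Function.Injective (expOf (n := n) (q := q)) := by
  intro e e' h
  have := Finsupp.equivFunOnFinite.symm.injective h
  funext i
  exact Fin.val_injective (congrFun this i)

lemma exists_low_degree_vanishing (T : Finset (Fin n → L)) (q : ℕ) (hq : 0 < q)
    (hcard : T.card < q ^ n) :
    ∃ P : MvPolynomial (Fin n) L, P ≠ 0 ∧ P.totalDegree ≤ n * (q - 1) ∧
      ∀ x ∈ T, MvPolynomial.eval x P = 0 := by
  classical
  -- the evaluation linear map
  let E : ((Fin n → Fin q) → L) →ₗ[L] ({x // x ∈ T} → L) :=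
    { toFun := fun c x => ∑ e : Fin n → Fin q,
        c e * MvPolynomial.eval x.1 (MvPolynomial.monomial (expOf e) (1:L))
      map_add' := by
        intro c d; funext x; simp [add_mul, Finset.sum_add_distrib]
      map_smul' := by
        intro a c; funext x; simp [Finset.mul_sum, mul_assoc] }
  have hnotinj : ¬ Function.Injective E := by
    intro hinj
    have h1 := LinearMap.finrank_le_finrank_of_injective hinj
    rw [Module.finrank_fintype_fun_eq_card, Module.finrank_fintype_fun_eq_card] at h1
    rw [Fintype.card_fun, Fintype.card_coe, Fintype.card_fin, Fintype.card_fin] at h1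
    omega
  rw [Function.not_injective_iff] at hnotinj
  obtain ⟨c₁, c₂, hE, hne⟩ := hnotinj
  set c := c₁ - c₂ with hc
  have hc0 : c ≠ 0 := sub_ne_zero_of_ne hne
  have hEc : E c = 0 := by rw [hc, map_sub, hE, sub_self]
  refine ⟨∑ e : Fin n → Fin q, MvPolynomial.monomial (expOf e) (c e), ?_, ?_, ?_⟩
  · obtain ⟨e₀, he₀⟩ := Function.ne_iff.mp hc0
    intro h0
    apply he₀
    have := congrArg (MvPolynomial.coeff (expOf e₀)) h0
    rw [MvPolynomial.coeff_zero] at this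
    simp only [Pi.zero_apply]
    rw [← this]
    rw [MvPolynomial.coeff_sum]
    rw [Finset.sum_eq_single e₀]
    · simp [MvPolynomial.coeff_monomial]
    · intro e _ hee
      rw [MvPolynomial.coeff_monomial, if_neg (fun h => hee (expOf_injective h))]
    · simp
  · refine (MvPolynomial.totalDegree_finset_sum _ _).trans ?_
    apply Finset.sup_le
    intro e _
    refine le_trans (MvPolynomial.totalDegree_monomial_le _ _) ?_
    rw [expOf]
    rw [Finsupp.sum_fintype _ _ (fun _ => rfl)]
    calc ∑ i, ((Finsupp.equivFunOnFinite.symm fun i => (e i : ℕ)) i)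
        = ∑ i : Fin n, (e i : ℕ) := by rfl
      _ ≤ ∑ _i : Fin n, (q - 1) := Finset.sum_le_sum (fun i _ => Nat.le_sub_one_of_lt (e i).2)
      _ = n * (q - 1) := by simp [Finset.sum_const, Finset.card_univ]
  · intro x hx
    have := congrFun hEc ⟨x, hx⟩
    simp only [E, LinearMap.coe_mk, AddHom.coe_mk, Pi.zero_apply] at this
    rw [map_sum]
    rw [← this]
    congr 1
    funext e
    simp [MvPolynomial.eval_monomial]




lemma finsupp_deg_eq (σ : Fin n →₀ ℕ) : (σ.sum fun _ e => e) = ∑ k, σ k :=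
  Finsupp.sum_fintype _ _ (fun _ => rfl)

lemma eq_C_of_pderiv_eq_zero [CharZero L] (P : MvPolynomial (Fin n) L)
    (h : ∀ j, MvPolynomial.pderiv j P = 0) : P = MvPolynomial.C (MvPolynomial.coeff 0 P) := by
  ext σ
  rcases eq_or_ne σ 0 with rfl | hσ
  · simp
  · rw [MvPolynomial.coeff_C, if_neg (Ne.symm hσ)]
    obtain ⟨j, hj⟩ : ∃ j, σ j ≠ 0 := by
      by_contra hall
      push_neg at hall
      exact hσ (Finsupp.ext fun j => hall j)
    set τ' : Fin n →₀ ℕ := σ - Finsupp.single j 1 with hτ'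
    have key := coeff_pderiv j P τ'
    rw [h j, MvPolynomial.coeff_zero] at key
    have hle : Finsupp.single j 1 ≤ σ := by rw [Finsupp.single_le_iff]; omega
    rw [hτ', tsub_add_cancel_of_le hle] at key
    have hne : ((τ' j + 1 : ℕ) : L) ≠ 0 := by
      push_cast
      exact Nat.cast_add_one_ne_zero _
    exact (mul_eq_zero.mp key.symm).resolve_left hne

lemma exists_pth_root {p : ℕ} [Fact p.Prime] [CharP L p] [PerfectRing L p]
    (P : MvPolynomial (Fin n) L) (h : ∀ j, MvPolynomial.pderiv j P = 0) :
    ∃ S : MvPolynomial (Fin n) L, S ^ p = P ∧ S.totalDegree ≤ P.totalDegree / p := by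
  classical
  have hp : 0 < p := (Fact.out : p.Prime).pos
  have hdvd : ∀ σ ∈ P.support, ∀ j, p ∣ σ j := by
    intro σ hσ j
    rcases Nat.eq_zero_or_pos (σ j) with h0 | hjpos
    · simp [h0]
    · set τ' : Fin n →₀ ℕ := σ - Finsupp.single j 1 with hτ'
      have key := coeff_pderiv j P τ'
      rw [h j, MvPolynomial.coeff_zero] at key
      have hle : Finsupp.single j 1 ≤ σ := by rw [Finsupp.single_le_iff]; omega
      rw [hτ', tsub_add_cancel_of_le hle] at key
      have hσc : MvPolynomial.coeff σ P ≠ 0 := MvPolynomial.mem_support_iff.mp hσ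
      have hcast : ((τ' j + 1 : ℕ) : L) = 0 := by
        by_contra hne
        exact hσc ((mul_eq_zero.mp key.symm).resolve_left hne)
      rw [CharP.cast_eq_zero_iff L p] at hcast
      have hτj : τ' j + 1 = σ j := by
        rw [hτ', Finsupp.tsub_apply, Finsupp.single_apply, if_pos rfl]
        omega
      rwa [hτj] at hcast
  -- the candidate root
  let τ : (Fin n →₀ ℕ) → (Fin n →₀ ℕ) := fun σ => Finsupp.mapRange (· / p) (by simp) σ
  have hτ : ∀ σ ∈ P.support, p • τ σ = σ := by
    intro σ hσ
    ext k
    simp only [Finsupp.smul_apply, Finsupp.mapRange_apply, smul_eq_mul, τ]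
    exact Nat.mul_div_cancel' (hdvd σ hσ k)
  set S : MvPolynomial (Fin n) L :=
    ∑ σ ∈ P.support, MvPolynomial.monomial (τ σ) ((frobeniusEquiv L p).symm (P.coeff σ)) with hS
  refine ⟨S, ?_, ?_⟩
  · have hfrob : S ^ p = frobenius (MvPolynomial (Fin n) L) p S := rfl
    rw [hfrob, hS, map_sum]
    conv_rhs => rw [← P.support_sum_monomial_coeff]
    apply Finset.sum_congr rfl
    intro σ hσ
    rw [frobenius_def, MvPolynomial.monomial_pow, hτ σ hσ]
    congr 1
    have : ((frobeniusEquiv L p).symm (P.coeff σ)) ^ p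
        = frobeniusEquiv L p ((frobeniusEquiv L p).symm (P.coeff σ)) := rfl
    rw [this, RingEquiv.apply_symm_apply]
  · rw [hS]
    refine (MvPolynomial.totalDegree_finset_sum _ _).trans ?_
    apply Finset.sup_le
    intro σ hσ
    refine (MvPolynomial.totalDegree_monomial_le _ _).trans ?_
    have h1 : (τ σ).sum (fun _ e => e) * p = σ.sum (fun _ e => e) := by
      rw [finsupp_deg_eq, finsupp_deg_eq, Finset.sum_mul]
      apply Finset.sum_congr rfl
      intro k _
      simp only [Finsupp.mapRange_apply, τ]
      exact Nat.div_mul_cancel (hdvd σ hσ k)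
    have h2 : σ.sum (fun _ e => e) ≤ P.totalDegree := MvPolynomial.le_totalDegree hσ
    have h3 : (τ σ).sum (fun _ e => e) = σ.sum (fun _ e => e) / p := by
      rw [← h1, Nat.mul_div_cancel _ hp]
    have h4 : ((τ σ).sum fun _ e => e) ≤ P.totalDegree / p := by
      rw [h3]; exact Nat.div_le_div_right h2
    exact h4





lemma eq_C_of_totalDegree_eq_zero (P : MvPolynomial (Fin n) L) (h : P.totalDegree = 0) :
    P = MvPolynomial.C (MvPolynomial.coeff 0 P) := by
  ext σ
  rcases eq_or_ne σ 0 with rfl | hσ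
  · simp
  · rw [MvPolynomial.coeff_C, if_neg (Ne.symm hσ)]
    by_contra hc
    have hmem : σ ∈ P.support := MvPolynomial.mem_support_iff.mpr hc
    exact hσ (Finsupp.ext fun j => (MvPolynomial.totalDegree_eq_zero_iff (Fin n) P).mp h σ hmem j)

/-- The key claim: any nonzero polynomial vanishing (via `φ`) on `K` has total degree `≥ m`. -/
lemma key_claim [PerfectField L] (φ : F →+* L) (𝔏 : Finset (Set (Fin n → F)))
    (K : Set (Fin n → F)) (m : ℕ)
    (hKfin : K.Finite) (hKne : K.Nonempty)
    (hL : ∀ l ∈ 𝔏, IsLine F l) (hK : ∀ x ∈ K, IsJoint F ↑𝔏 x)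
    (hm : ∀ l ∈ 𝔏, m ≤ (l ∩ K).ncard) :
    ∀ (d : ℕ) (P : MvPolynomial (Fin n) L), P.totalDegree = d → P ≠ 0 →
      (∀ x ∈ K, MvPolynomial.eval (φ ∘ x) P = 0) → m ≤ d := by
  intro d
  induction d using Nat.strong_induction_on with
  | _ d IH =>
  intro P hPd hP0 hPv
  by_contra hmd
  push_neg at hmd   -- hmd : d < m
  -- Step 1: P vanishes identically on every line of 𝔏, in parametrized form.
  have step1 : ∀ x ∈ K, ∀ l ∈ 𝔏, x ∈ l → ∀ b : Fin n → F, IsDirection F b l →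
      (MvPolynomial.aeval (fun i => Polynomial.C (φ (x i)) + Polynomial.X * Polynomial.C (φ (b i)))
        P : L[X]) = 0 := by
    intro x hx l hl hxl b hb
    obtain ⟨hbne, v, rfl⟩ := hb
    have hreb := line_rebase (v := v) (b := b) (x₀ := x) hxl
    set S : Set F := {s : F | x + s • b ∈ K} with hSdef
    have himg : (fun s : F => x + s • b) '' S = {y | ∃ t : F, y = v + t • b} ∩ K := by
      rw [hreb]
      ext y
      constructor
      · rintro ⟨s, hs, rfl⟩
        exact ⟨⟨s, rfl⟩, hs⟩
      · rintro ⟨⟨s, rfl⟩, hyK⟩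
        exact ⟨s, hyK, rfl⟩
    have hSfin : S.Finite := by
      have : S = (fun s : F => x + s • b) ⁻¹' K := rfl
      rw [this]
      exact Set.Finite.preimage (Set.injOn_of_injective (param_injective hbne x)) hKfin
    have hScard : m ≤ S.ncard := by
      have := Set.ncard_image_of_injective S (param_injective hbne x)
      rw [himg] at this
      rw [← this]
      exact hm _ hl
    set Q : L[X] := MvPolynomial.aeval
      (fun i => Polynomial.C (φ (x i)) + Polynomial.X * Polynomial.C (φ (b i))) P with hQ
    have hQdeg : Q.natDegree ≤ d := by
      rw [hQ, ← hPd]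
      apply natDegree_aeval_le
      intro i
      refine (Polynomial.natDegree_add_le _ _).trans ?_
      refine max_le (by simp) ?_
      refine (Polynomial.natDegree_mul_le).trans ?_
      simp
    have hQeval : ∀ s : F, s ∈ S → Q.eval (φ s) = 0 := by
      intro s hs
      have hcomp : Q.eval (φ s) = MvPolynomial.eval (φ ∘ (x + s • b)) P := by
        rw [hQ]
        have h1 : Polynomial.aeval (φ s) (MvPolynomial.aeval
            (fun i => Polynomial.C (φ (x i)) + Polynomial.X * Polynomial.C (φ (b i))) P : L[X])
            = MvPolynomial.aeval (fun i => φ (x i) + φ s * φ (b i)) P := by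
          rw [MvPolynomial.comp_aeval_apply]
          have hfun : (fun i => Polynomial.aeval (φ s)
              (Polynomial.C (φ (x i)) + Polynomial.X * Polynomial.C (φ (b i))))
              = fun i => φ (x i) + φ s * φ (b i) := by
            funext i; simp; ring
          rw [hfun]
        have h2 : Polynomial.aeval (φ s) Q = Q.eval (φ s) :=
          congrFun (Polynomial.coe_aeval_eq_eval (φ s)) Q
        rw [← h2, hQ, h1]
        have h3 : (φ ∘ (x + s • b)) = fun i => φ (x i) + φ s * φ (b i) := by
          funext i; simp
        rw [h3]
        exact congrFun (congrArg DFunLike.coe (MvPolynomial.coe_aeval_eq_eval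
          (fun i => φ (x i) + φ s * φ (b i)))) P
      rw [hcomp]
      exact hPv _ hs
    -- Q has more roots than its degree
    have hfin' : Finite S := hSfin
    have : Q = 0 := by
      classical
      have hfs := hSfin.toFinset
      apply Polynomial.eq_zero_of_natDegree_lt_card_of_eval_eq_zero Q
        (f := fun s : hSfin.toFinset => φ s.1)
        (fun a b hab => Subtype.ext (φ.injective hab))
      · intro s
        exact hQeval s.1 (hSfin.mem_toFinset.mp s.2)
      · rw [Fintype.card_coe]
        have : S.ncard = hSfin.toFinset.card := Set.ncard_eq_toFinset_card S hSfin
        omega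
    exact this
  -- Step 2: all partial derivatives of P vanish on (the image of) K.
  have step2 : ∀ x ∈ K, ∀ j, MvPolynomial.eval (φ ∘ x) (MvPolynomial.pderiv j P) = 0 := by
    intro x hx
    obtain ⟨l, hlinj, hlmem, ⟨hxmem, b, hdir, hspan⟩⟩ := hK x hx
    have hvan : ∀ i, ∑ j, φ (b i j) * MvPolynomial.eval (φ ∘ x) (MvPolynomial.pderiv j P) = 0 := by
      intro i
      have hQ0 := step1 x hx (l i) (hlmem i) (hxmem i) (b i) (hdir i)
      have hder := derivative_aeval
        (fun k => Polynomial.C (φ (x k)) + Polynomial.X * Polynomial.C (φ (b i k))) P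
      rw [hQ0, map_zero] at hder
      have hder0 := congrArg (Polynomial.eval (0 : L)) hder.symm
      rw [Polynomial.eval_zero, Polynomial.eval_finset_sum] at hder0
      rw [← hder0]
      apply Finset.sum_congr rfl
      intro j _
      rw [Polynomial.eval_mul]
      have hd1 : Polynomial.derivative
          (Polynomial.C (φ (x j)) + Polynomial.X * Polynomial.C (φ (b i j))) =
          Polynomial.C (φ (b i j)) := by
        simp
      rw [hd1, Polynomial.eval_C]
      rw [mul_comm]
      congr 1
      have h1 : Polynomial.aeval (0 : L) (MvPolynomial.aeval
          (fun k => Polynomial.C (φ (x k)) + Polynomial.X * Polynomial.C (φ (b i k)))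
          (MvPolynomial.pderiv j P) : L[X])
          = MvPolynomial.aeval (fun k => φ (x k)) (MvPolynomial.pderiv j P) := by
        rw [MvPolynomial.comp_aeval_apply]
        have hfun : (fun k => Polynomial.aeval (0:L)
            (Polynomial.C (φ (x k)) + Polynomial.X * Polynomial.C (φ (b i k))))
            = fun k => φ (x k) := by
          funext k; simp
        rw [hfun]
      have h2 : ∀ (R : L[X]), Polynomial.aeval (0 : L) R = R.eval 0 := fun R =>
        congrFun (Polynomial.coe_aeval_eq_eval (0:L)) R
      have h3 : ∀ (R : MvPolynomial (Fin n) L), MvPolynomial.aeval (fun k => φ (x k)) R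
          = MvPolynomial.eval (φ ∘ x) R := fun R =>
        congrFun (congrArg DFunLike.coe (MvPolynomial.coe_aeval_eq_eval
          (fun k => φ (x k)))) R
      rw [← h2, h1, h3]
    have hspan' : Submodule.span L (Set.range (fun i => φ ∘ b i)) = ⊤ :=
      span_transfer φ b hspan
    intro j
    exact eq_zero_of_dot_span (fun i => φ ∘ b i)
      (fun j => MvPolynomial.eval (φ ∘ x) (MvPolynomial.pderiv j P)) hspan'
      (fun i => hvan i) j
  -- Step 3: all partial derivatives of P are identically zero.
  have step3 : ∀ j, MvPolynomial.pderiv j P = 0 := by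
    intro j
    by_contra hj
    set dj := (MvPolynomial.pderiv j P).totalDegree with hdj
    have hsupp : ((MvPolynomial.pderiv j P).support).Nonempty :=
      MvPolynomial.support_nonempty.mpr hj
    obtain ⟨σ, hσmem, hσsum⟩ := Finset.exists_mem_eq_sup _ hsupp
      (fun σ : Fin n →₀ ℕ => σ.sum fun _ e => e)
    have hcoe : MvPolynomial.coeff σ (MvPolynomial.pderiv j P) ≠ 0 :=
      MvPolynomial.mem_support_iff.mp hσmem
    rw [_root_.coeff_pderiv] at hcoe
    have hcP : MvPolynomial.coeff (σ + Finsupp.single j 1) P ≠ 0 := by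
      intro h0; rw [h0, mul_zero] at hcoe; exact hcoe rfl
    have hmemP : σ + Finsupp.single j 1 ∈ P.support := MvPolynomial.mem_support_iff.mpr hcP
    have hsum : ((σ + Finsupp.single j 1).sum fun _ e => e) ≤ d := by
      rw [← hPd]; exact MvPolynomial.le_totalDegree hmemP
    have hsum2 : ((σ + Finsupp.single j 1).sum fun _ e => e)
        = (σ.sum fun _ e => e) + 1 := by
      rw [finsupp_deg_eq, finsupp_deg_eq]
      simp [Finsupp.add_apply, Finsupp.single_apply, Finset.sum_add_distrib]
    have hEq : (MvPolynomial.pderiv j P).totalDegree = σ.sum fun _ e => e := hσsum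
    have hdjlt : dj < d := by rw [hdj, hEq]; omega
    have := IH dj hdjlt (MvPolynomial.pderiv j P) rfl hj (fun x hx => step2 x hx j)
    omega
  -- Step 4: char analysis gives a contradiction.
  obtain ⟨x₀, hx₀⟩ := hKne
  rcases Nat.eq_zero_or_pos d with rfl | hd1
  · have hPC := eq_C_of_totalDegree_eq_zero P hPd
    have := hPv x₀ hx₀
    rw [hPC, MvPolynomial.eval_C] at this
    exact hP0 (by rw [hPC, this, map_zero])
  obtain ⟨p, hp⟩ := CharP.exists L
  haveI := hp
  rcases CharP.char_is_prime_or_zero L p with hpp | hp0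
  · -- characteristic p > 0
    haveI := Fact.mk hpp
    haveI : ExpChar L p := ExpChar.prime hpp
    obtain ⟨S, hSp, hSdeg⟩ := exists_pth_root (p := p) P step3
    · have hS0 : S ≠ 0 := by
        intro h0; rw [h0, zero_pow hpp.pos.ne'] at hSp; exact hP0 hSp.symm
      have hSvan : ∀ x ∈ K, MvPolynomial.eval (φ ∘ x) S = 0 := by
        intro x hx
        have : (MvPolynomial.eval (φ ∘ x) S) ^ p = 0 := by
          rw [← map_pow, hSp]; exact hPv x hx
        exact pow_eq_zero_iff hpp.pos.ne' |>.mp this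
      have hSd : S.totalDegree < d := by
        have h1 : d / p ≤ d / 2 := Nat.div_le_div_left hpp.two_le (by norm_num)
        have h2 : d / 2 < d := Nat.div_lt_self hd1 (by norm_num)
        rw [hPd] at hSdeg
        omega
      have := IH S.totalDegree hSd S rfl hS0 hSvan
      omega
  · -- characteristic zero
    subst hp0
    haveI : CharZero L := CharP.charP_to_charZero L
    have hPC := eq_C_of_pderiv_eq_zero P step3
    have := hPv x₀ hx₀
    rw [hPC, MvPolynomial.eval_C] at this
    exact hP0 (by rw [hPC, this, map_zero])




lemma K_finite (hn : 2 ≤ n) (𝔏 : Finset (Set (Fin n → F)))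
    (hL : ∀ l ∈ 𝔏, IsLine F l) (K : Set (Fin n → F))
    (hK : ∀ x ∈ K, IsJoint F ↑𝔏 x) : K.Finite := by
  classical
  set i0 : Fin n := ⟨0, by omega⟩ with hi0
  set i1 : Fin n := ⟨1, by omega⟩ with hi1
  have hne01 : i0 ≠ i1 := by simp [hi0, hi1, Fin.ext_iff]
  rw [← Set.finite_coe_iff]
  have hch : ∀ x : K, ∃ l : Fin n → Set (Fin n → F), Function.Injective l ∧
      (∀ i, l i ∈ 𝔏) ∧ (∀ i, x.1 ∈ l i) := by
    intro x
    obtain ⟨l, hinj, hmem, hforms⟩ := hK x.1 x.2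
    exact ⟨l, hinj, hmem, hforms.1⟩
  choose l hlinj hlmem hlx using hch
  let f : K → {A // A ∈ 𝔏} × {A // A ∈ 𝔏} :=
    fun x => (⟨l x i0, hlmem x i0⟩, ⟨l x i1, hlmem x i1⟩)
  have hfinj : Function.Injective f := by
    intro x y hxy
    by_contra hxyne
    have hxy1 : x.1 ≠ y.1 := fun h => hxyne (Subtype.ext h)
    have hA : l x i0 = l y i0 := congrArg (fun z => z.1.1) hxy
    have hB : l x i1 = l y i1 := congrArg (fun z => z.2.1) hxy
    have hAB : l x i0 ≠ l x i1 := fun h => hne01 (hlinj x h)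
    apply hAB
    exact lines_eq_of_two_points (hL _ (hlmem x i0)) (hL _ (hlmem x i1)) hxy1
      (hlx x i0) (hA ▸ hlx y i0) (hlx x i1) (hB ▸ hlx y i1)
  exact Finite.of_injective f hfinj

/-- For `n ≥ 3` there is a constant `c > 0` depending only on `n` such that for any field
`F`, any nonempty finite set `𝔏` of lines in `F^n` and any subset `K` of the joints of
`𝔏`, if every line of `𝔏` contains at least `m` points of `K` then `|K| ≥ c·m^n`. -/
theorem stmt8 (n : ℕ) (hn : 3 ≤ n) :
    ∃ c : ℝ, 0 < c ∧ ∀ (F : Type) [Field F] (𝔏 : Finset (Set (Fin n → F)))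
      (K : Set (Fin n → F)) (m : ℕ),
      𝔏.Nonempty → (∀ l ∈ 𝔏, IsLine F l) → (∀ x ∈ K, IsJoint F ↑𝔏 x) →
      (∀ l ∈ 𝔏, m ≤ (l ∩ K).ncard) →
      c * (m : ℝ) ^ n ≤ (K.ncard : ℝ) := by
  have hn0 : 0 < n := by omega
  refine ⟨((n : ℝ) ^ n)⁻¹, by positivity, ?_⟩
  intro F _ 𝔏 K m h𝔏 hL hK hm
  rcases Nat.eq_zero_or_pos m with rfl | hm1
  · simp only [Nat.cast_zero, zero_pow hn0.ne', mul_zero]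
    positivity
  -- K is finite
  have hKfin : K.Finite := K_finite (by omega) 𝔏 hL K hK
  -- K is nonempty
  obtain ⟨l₀, hl₀⟩ := h𝔏
  have hKne : K.Nonempty := by
    have h1 := hm l₀ hl₀
    have h2 : (l₀ ∩ K).Nonempty := Set.nonempty_of_ncard_ne_zero (by omega)
    exact ⟨h2.choose, h2.choose_spec.2⟩
  -- the algebraic closure
  set L := AlgebraicClosure F with hLdef
  set φ : F →+* L := algebraMap F L with hφ
  set q : ℕ := (m - 1) / n + 1 with hq
  -- main counting step
  have hmain : q ^ n ≤ K.ncard := by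
    by_contra hlt
    push_neg at hlt
    -- the image of K in L^n
    have hinj : Function.Injective (fun x : Fin n → F => φ ∘ x) := by
      intro a b hab
      funext i
      exact φ.injective (congrFun hab i)
    set K' : Set (Fin n → L) := (fun x : Fin n → F => φ ∘ x) '' K with hK'
    have hK'fin : K'.Finite := hKfin.image _
    have hcard : hK'fin.toFinset.card = K.ncard := by
      rw [← Set.ncard_eq_toFinset_card K' hK'fin, hK']
      exact Set.ncard_image_of_injective K hinj
    obtain ⟨P, hP0, hPdeg, hPvan⟩ := exists_low_degree_vanishing hK'fin.toFinset q
      (by rw [hq]; exact Nat.succ_pos _) (by rw [hcard]; exact hlt)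
    have hPvan' : ∀ x ∈ K, MvPolynomial.eval (φ ∘ x) P = 0 := by
      intro x hx
      exact hPvan _ (hK'fin.mem_toFinset.mpr ⟨x, hx, rfl⟩)
    have hkey := key_claim φ 𝔏 K m hKfin hKne hL hK hm P.totalDegree P rfl hP0 hPvan'
    -- but totalDegree P ≤ n * (q - 1) ≤ m - 1 < m
    have hle : n * (q - 1) ≤ m - 1 := by
      rw [hq]
      simp only [Nat.add_sub_cancel]
      calc n * ((m - 1) / n) = ((m - 1) / n) * n := Nat.mul_comm _ _
        _ ≤ m - 1 := Nat.div_mul_le_self _ _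
    omega
  -- conclude with real arithmetic
  have hq_ge : m ≤ n * q := by
    have h := Nat.div_add_mod (m - 1) n
    have h2 : (m - 1) % n < n := Nat.mod_lt _ hn0
    rw [hq]
    rw [Nat.mul_add, Nat.mul_one]
    omega
  have hR : (m : ℝ) ≤ (n : ℝ) * (q : ℝ) := by exact_mod_cast hq_ge
  have hKcard : ((q : ℝ)) ^ n ≤ (K.ncard : ℝ) := by exact_mod_cast hmain
  have hnn : (0:ℝ) < (n:ℝ) ^ n := by positivity
  calc ((n : ℝ) ^ n)⁻¹ * (m:ℝ) ^ n ≤ (q:ℝ) ^ n := by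
        rw [inv_mul_le_iff₀ hnn]
        calc (m:ℝ)^n ≤ ((n:ℝ) * (q:ℝ))^n := pow_le_pow_left₀ (by positivity) hR n
          _ = (n:ℝ)^n * (q:ℝ)^n := mul_pow _ _ _
    _ ≤ (K.ncard : ℝ) := hKcard
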